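/- Let f be a morphism from A* to B* with the property: whenever f(a) = ps, f(b) = ps', f(c) = p's for letters a, b, c ∈ A (possibly c = b) and words p, s, s', p' ∈ B*, then b = a or c = a (i.e., f is a ps-morphism). Then f restricted to non-empty words is injective, provided f(a) ≠ ε for all letters a. -/

import Mathlib

/-- Extension of a letter map to a morphism of free monoids. -/
def applyMorph {α β : Type*} (g : α → List β) (w : List α) : List β := w.flatMap g

theorem ps_morphism_injective {α β : Type*} (g : α → List β)
    (hps : ∀ (a b c : α) (p s s' p' : List β),
      g a = p ++ s → g b = p ++ s' → g c = p' ++ s → b = a ∨ c = a)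
    (hne : ∀ a : α, g a ≠ []) :
    ∀ u v : List α, u ≠ [] → v ≠ [] → applyMorph g u = applyMorph g v → u = v := by
  have key : ∀ a b : α, g a <+: g b → b = a := by
    rintro a b ⟨t, ht⟩
    rcases hps a b b (g a) [] t (g b) (by simp) (by simp [← ht]) (by simp) with h | h <;>
      exact h
  have bnil : ∀ w : List α, w.flatMap g = [] → w = [] := by
    intro w hw
    cases w with
    | nil => rfl
    | cons x w =>
      exfalso
      simp only [List.flatMap_cons, List.append_eq_nil_iff] at hw
      exact hne x hw.1
  intro u
  induction u with
  | nil => intro v h; exact absurd rfl h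
  | cons a u ih =>
    intro v _ hv heq
    match v with
    | [] => exact absurd rfl hv
    | b :: v =>
      simp only [applyMorph, List.flatMap_cons] at heq
      have hab : a = b := by
        have h1 : g a <+: g a ++ u.flatMap g := List.prefix_append _ _
        have h2 : g b <+: g a ++ u.flatMap g := heq ▸ List.prefix_append _ _
        rcases List.prefix_or_prefix_of_prefix h1 h2 with h | h
        · exact (key a b h).symm
        · exact key b a h
      subst hab
      have htail : u.flatMap g = v.flatMap g := List.append_cancel_left heq
      cases u with
      | nil =>
        have : v = [] := bnil v (by simpa using htail.symm)
        simp [this]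
      | cons x u' =>
        have hv' : v ≠ [] := by
          intro h
          subst h
          exact hne x ((by simpa [List.flatMap_cons, List.append_eq_nil_iff] using htail : g x = [] ∧ u'.flatMap g = [])).1
        have := ih v (by simp) hv' htail
        rw [this]
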